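/- Let φ : (G,P) → (G',P') be a fibration of networks. Then the pullback map φ* : V(G',P') → V(G,P) between spaces of groupoid-invariant virtual vector fields is surjective, and its kernel is {w' ∈ V(G',P') : w'_{a'} = 0 for all a' in the essential image of φ}, where the essential image consists of the vertices a' of G' whose input network (I(a'),P'∘ξ_{a'}) is isomorphic to (I(φ(a)),P'∘ξ_{φ(a)}) for some vertex a of G. -/

import Mathlib

open Manifold

structure DGraph where
  V : Type
  E : Type
  src : E → V
  tgt : E → V

/-- A map of directed multigraphs: functions on edges and vertices commuting with
source and target. -/
structure GraphMap (G G' : DGraph) where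
  vmap : G.V → G'.V
  emap : G.E → G'.E
  src_eq : ∀ e, G'.src (emap e) = vmap (G.src e)
  tgt_eq : ∀ e, G'.tgt (emap e) = vmap (G.tgt e)

/-- `φ` is a graph fibration if for every vertex `a` of `G` and every edge `e'` of `G'`
with target `φ(a)`, there is a unique edge `e` of `G` with target `a` and `φ(e) = e'`. -/
def GraphMap.IsFibration {G G' : DGraph} (φ : GraphMap G G') : Prop :=
  ∀ (a : G.V) (e' : G'.E), G'.tgt e' = φ.vmap a →
    ∃! e : G.E, G.tgt e = a ∧ φ.emap e = e'

/-- The set of edges of `G` with target `a`. -/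
abbrev inEdges (G : DGraph) (a : G.V) : Type := {e : G.E // G.tgt e = a}

/-- The input tree `I(a)` of a vertex `a`: its vertices are `{a} ⊔ t⁻¹(a)` (the root `a`
is encoded as `none`, the leaf `γ ∈ t⁻¹(a)` as `some γ`), its edges are the pairs `(a, γ)`
for `γ ∈ t⁻¹(a)`, with source `γ` and target the root `a`. -/
def inputTree (G : DGraph) (a : G.V) : DGraph where
  V := Option (inEdges G a)
  E := inEdges G a
  src := fun γ => some γ
  tgt := fun _ => none

/-- An isomorphism of graphs is a graph map bijective on vertices and on edges. -/
def GraphMap.IsIso {G G' : DGraph} (φ : GraphMap G G') : Prop :=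
  Function.Bijective φ.vmap ∧ Function.Bijective φ.emap


/-- An isomorphism of input networks `(I(a), P ∘ ξ_a) → (I(a'), P' ∘ ξ_{a'})`.
Since any isomorphism of height-1 trees sends root to root and is determined by its
action on the leaves (equivalently, on the edges), it is given by a bijection `e` of the
sets of incoming edges; the network (phase-preserving) condition says that the root
phases agree (`hr`) and the phases of corresponding leaves agree (`hl`). -/
structure InputIso {ι : Type} (G : DGraph) (P : G.V → ι) (G' : DGraph) (P' : G'.V → ι)
    (a : G.V) (a' : G'.V) where
  e : inEdges G a ≃ inEdges G' a'
  hr : P' a' = P a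
  hl : ∀ γ : inEdges G a, P' (G'.src ((e γ) : inEdges G' a').1) = P (G.src γ.1)

/-- The identity isomorphism of an input network. -/
def InputIso.refl {ι : Type} (G : DGraph) (P : G.V → ι) (a : G.V) :
    InputIso G P G P a a :=
  ⟨Equiv.refl _, rfl, fun _ => rfl⟩

/-- Composition of isomorphisms of input networks. -/
def InputIso.comp {ι : Type} {G : DGraph} {P : G.V → ι} {G' : DGraph} {P' : G'.V → ι}
    {G'' : DGraph} {P'' : G''.V → ι} {a : G.V} {a' : G'.V} {a'' : G''.V}
    (σ : InputIso G P G' P' a a') (σ' : InputIso G' P' G'' P'' a' a'') :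
    InputIso G P G'' P'' a a'' :=
  ⟨σ.e.trans σ'.e, σ'.hr.trans σ.hr, fun γ => (σ'.hl (σ.e γ)).trans (σ.hl γ)⟩

/-- The inverse of an isomorphism of input networks. -/
def InputIso.inv {ι : Type} {G : DGraph} {P : G.V → ι} {G' : DGraph} {P' : G'.V → ι}
    {a : G.V} {a' : G'.V} (σ : InputIso G P G' P' a a') : InputIso G' P' G P a' a :=
  ⟨σ.e.symm, σ.hr.symm, fun γ' => by
    have h := σ.hl (σ.e.symm γ')
    rw [Equiv.apply_symm_apply] at h
    exact h.symm⟩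

variable {ι : Type} {EE : ι → Type} [∀ i, NormedAddCommGroup (EE i)]
  [∀ i, NormedSpace ℝ (EE i)] {HH : ι → Type} [∀ i, TopologicalSpace (HH i)]
  (II : ∀ i, ModelWithCorners ℝ (EE i) (HH i))
  (MM : ι → Type) [∀ i, TopologicalSpace (MM i)] [∀ i, ChartedSpace (HH i) (MM i)]
  [∀ i, IsManifold (II i) ((⊤ : ℕ∞) : WithTop ℕ∞) (MM i)]

/-- The total phase space `P I(a) = P(a) × ⊓_{γ ∈ t⁻¹(a)} P(s(γ))` of the input network
of the vertex `a` of the network `(G, P)` (phase spaces drawn from the family of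
manifolds `MM` via the index function `P : G.V → ι`). -/
abbrev PIn (G : DGraph) (P : G.V → ι) (a : G.V) : Type :=
  MM (P a) × ((γ : inEdges G a) → MM (P (G.src γ.1)))

/-- The underlying (not necessarily smooth) sections of the control space
`Ctrl(P I(a) → P a)`: maps `F` from `P I(a)` to the tangent bundle of `P a = P(a)` with
`F q ∈ T_{p(q)} P(a)`, where `p : P I(a) → P(a)` is the projection onto the root factor. -/
abbrev Raw (G : DGraph) (P : G.V → ι) (a : G.V) : Type :=
  (q : PIn MM G P a) → TangentSpace (II (P a)) q.1

/-- The model with corners for the manifold `P I(a)`. -/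
noncomputable def PInModel (G : DGraph) [Fintype G.E] [DecidableEq G.V]
    (P : G.V → ι) (a : G.V) :
    ModelWithCorners ℝ (EE (P a) × ((γ : inEdges G a) → EE (P (G.src γ.1))))
      (ModelProd (HH (P a)) (ModelPi fun γ : inEdges G a => HH (P (G.src γ.1)))) :=
  (II (P a)).prod (ModelWithCorners.pi fun γ : inEdges G a => II (P (G.src γ.1)))

/-- Smoothness of an element of `Ctrl(P I(a) → P a)`, as a map into the tangent bundle.
`Ctrl(P I(a) → P a)` is the vector space of smooth maps `F : P I(a) → T P(a)` with
`F q ∈ T_{p(q)} P(a)`, i.e. the subspace of smooth elements of `Raw`. -/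
def IsSmoothCtrl (G : DGraph) [Fintype G.E] [DecidableEq G.V] (P : G.V → ι) (a : G.V)
    (F : Raw II MM G P a) : Prop :=
  ContMDiff (PInModel II G P a) (II (P a)).tangent (⊤ : ℕ∞)
    (fun q => Bundle.TotalSpace.mk q.1 (F q) :
      PIn MM G P a → TangentBundle (II (P a)) (MM (P a)))

/-- The map `P φ : P I(a') → P I(a)` of total phase spaces of input networks induced
(contravariantly) by an isomorphism `φ` of input networks. -/
def phaseIn {G : DGraph} {P : G.V → ι} {G' : DGraph} {P' : G'.V → ι} {a : G.V}
    {a' : G'.V} (σ : InputIso G P G' P' a a') : PIn MM G' P' a' → PIn MM G P a :=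
  fun q => (cast (congrArg MM σ.hr) q.1,
    fun γ => cast (congrArg MM (σ.hl γ)) (q.2 (σ.e γ)))

/-- Transport of tangent vectors along an equality of phase space indices; this is the
differential of the induced diffeomorphism of phase spaces (a `cast`). -/
def tcast {i j : ι} (h : i = j) {x : MM i} {y : MM j} (v : TangentSpace (II i) x) :
    TangentSpace (II j) y :=
  cast (congrArg EE h) v

/-- The map `Ctrl(φ) : Ctrl(P I(a) → P a) → Ctrl(P I(a') → P a')`,
`Ctrl(φ)(F) = D(P(φ|ₐ))⁻¹ ∘ F ∘ P φ`, induced by an isomorphism `φ` of input networks: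
here `P(φ|ₐ) : P(a') → P(a)` is the diffeomorphism (a `cast`) induced by the restriction
of `φ` to the root, and its differential is `tcast`. -/
def ctrlMap {G : DGraph} {P : G.V → ι} {G' : DGraph} {P' : G'.V → ι} {a : G.V}
    {a' : G'.V} (σ : InputIso G P G' P' a a') :
    Raw II MM G P a → Raw II MM G' P' a' :=
  fun F q' => tcast II MM σ.hr.symm (F (phaseIn MM σ q'))

/-- A virtual vector field on the network `(G, P)`, i.e. a section of the control bundle,
is smooth if each of its components is a smooth control system. -/
def IsSmoothSec (G : DGraph) [Fintype G.E] [DecidableEq G.V] (P : G.V → ι)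
    (w : ∀ a, Raw II MM G P a) : Prop :=
  ∀ a, IsSmoothCtrl II MM G P a (w a)

/-- A virtual vector field `w` on `(G, P)` is invariant under the symmetry groupoid if
`Ctrl(σ) (w a) = w b` for every isomorphism `σ : (I(a), P∘ξ_a) → (I(b), P∘ξ_b)` of input
networks.  Together with smoothness this cuts out `V(G,P) ⊆ S(G,P)`. -/
def IsInvariantSec (G : DGraph) (P : G.V → ι) (w : ∀ a, Raw II MM G P a) : Prop :=
  ∀ (a b : G.V) (σ : InputIso G P G P a b), ctrlMap II MM σ (w a) = w b

/-- The isomorphism of input networks `φ_a : (I(a), P∘ξ_a) → (I(φ(a)), P'∘ξ_{φ(a)})`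
induced by a fibration of networks `φ : (G,P) → (G',P')`. -/
noncomputable def fibIso {G G' : DGraph} (φ : GraphMap G G') (hφ : φ.IsFibration)
    {P : G.V → ι} {P' : G'.V → ι} (h : ∀ a, P' (φ.vmap a) = P a) (a : G.V) :
    InputIso G P G' P' a (φ.vmap a) where
  e :=
    { toFun := fun γ => ⟨φ.emap γ.1, by rw [φ.tgt_eq, γ.2]⟩
      invFun := fun γ' => ⟨Exists.choose (hφ a γ'.1 γ'.2),
        (Exists.choose_spec (hφ a γ'.1 γ'.2)).1.1⟩
      left_inv := fun γ => Subtype.ext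
        (((Exists.choose_spec (hφ a (φ.emap γ.1) (by rw [φ.tgt_eq, γ.2]))).2 γ.1
          ⟨γ.2, rfl⟩).symm)
      right_inv := fun γ' => Subtype.ext
        (Exists.choose_spec (hφ a γ'.1 γ'.2)).1.2 }
  hr := h a
  hl := fun γ => by
    show P' (G'.src (φ.emap γ.1)) = P (G.src γ.1)
    rw [φ.src_eq]; exact h _

/-- The pullback map `φ* : S(G',P') → S(G,P)` of virtual vector fields along a fibration
of networks `φ`, defined by `(φ* w')_a = Ctrl(φ_a)⁻¹ (w'_{φ(a)})`. -/
noncomputable def pullbackVF {G G' : DGraph} (φ : GraphMap G G') (hφ : φ.IsFibration)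
    {P : G.V → ι} {P' : G'.V → ι} (h : ∀ a, P' (φ.vmap a) = P a)
    (w' : ∀ a', Raw II MM G' P' a') : ∀ a, Raw II MM G P a :=
  fun a => ctrlMap II MM (fibIso φ hφ h a).inv (w' (φ.vmap a))

/-- The essential image of a fibration of networks `φ : (G,P) → (G',P')`: the set of
vertices `a'` of `G'` whose input network is isomorphic to the input network of `φ(a)`
for some vertex `a` of `G`. -/
def essImage {ι : Type} {G G' : DGraph} (φ : GraphMap G G') (P' : G'.V → ι) : Set G'.V :=
  {a' : G'.V | ∃ a : G.V, Nonempty (InputIso G' P' G' P' a' (φ.vmap a))}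
set_option linter.unusedSectionVars false

section Aux

theorem InputIso.ext' {ι : Type} {G : DGraph} {P : G.V → ι} {G' : DGraph} {P' : G'.V → ι}
    {a : G.V} {a' : G'.V} {σ τ : InputIso G P G' P' a a'} (hE : σ.e = τ.e) : σ = τ := by
  cases σ; cases τ; cases hE; rfl

variable {ι : Type} {EE : ι → Type} [∀ i, NormedAddCommGroup (EE i)]
  [∀ i, NormedSpace ℝ (EE i)] {HH : ι → Type} [∀ i, TopologicalSpace (HH i)]
  (II : ∀ i, ModelWithCorners ℝ (EE i) (HH i))
  (MM : ι → Type) [∀ i, TopologicalSpace (MM i)] [∀ i, ChartedSpace (HH i) (MM i)]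
  [∀ i, IsManifold (II i) ((⊤ : ℕ∞) : WithTop ℕ∞) (MM i)]

end Aux

section Aux2
variable {ι : Type} (MM : ι → Type)

theorem phaseIn_comp {G : DGraph} {P : G.V → ι} {G' : DGraph} {P' : G'.V → ι}
    {G'' : DGraph} {P'' : G''.V → ι} {a : G.V} {a' : G'.V} {a'' : G''.V}
    (σ : InputIso G P G' P' a a') (σ' : InputIso G' P' G'' P'' a' a'') :
    phaseIn MM (σ.comp σ') = phaseIn MM σ ∘ phaseIn MM σ' := by
  funext q
  refine Prod.ext ?_ ?_
  · simp [phaseIn, InputIso.comp, cast_cast]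
  · funext γ
    simp [phaseIn, InputIso.comp, cast_cast]

end Aux2

section Aux
variable {ι : Type} {EE : ι → Type} [∀ i, NormedAddCommGroup (EE i)]
  [∀ i, NormedSpace ℝ (EE i)] {HH : ι → Type} [∀ i, TopologicalSpace (HH i)]
  (II : ∀ i, ModelWithCorners ℝ (EE i) (HH i))
  (MM : ι → Type) [∀ i, TopologicalSpace (MM i)] [∀ i, ChartedSpace (HH i) (MM i)]
  [∀ i, IsManifold (II i) ((⊤ : ℕ∞) : WithTop ℕ∞) (MM i)]

theorem ctrlMap_comp {G : DGraph} {P : G.V → ι} {G' : DGraph} {P' : G'.V → ι}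
    {G'' : DGraph} {P'' : G''.V → ι} {a : G.V} {a' : G'.V} {a'' : G''.V}
    (σ : InputIso G P G' P' a a') (σ' : InputIso G' P' G'' P'' a' a'')
    (F : Raw II MM G P a) :
    ctrlMap II MM (σ.comp σ') F = ctrlMap II MM σ' (ctrlMap II MM σ F) := by
  funext q
  simp only [ctrlMap]
  simp [tcast, cast_cast]
  rw [phaseIn_comp MM σ σ']
  exact eq_of_heq ((cast_heq _ _).trans ((cast_heq _ _).trans (cast_heq _ _)).symm)

theorem ctrlMap_refl {G : DGraph} {P : G.V → ι} {a : G.V} (F : Raw II MM G P a) :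
    ctrlMap II MM (InputIso.refl G P a) F = F := rfl

theorem ctrlMap_congr {G : DGraph} {P : G.V → ι} {G' : DGraph} {P' : G'.V → ι}
    {a : G.V} {a' : G'.V} {σ τ : InputIso G P G' P' a a'} (hE : σ.e = τ.e) :
    ctrlMap (II := II) (MM := MM) σ = ctrlMap II MM τ := by
  rw [InputIso.ext' hE]

theorem ctrlMap_inv_cancel {G : DGraph} {P : G.V → ι} {G' : DGraph} {P' : G'.V → ι}
    {a : G.V} {a' : G'.V} (σ : InputIso G P G' P' a a') (F : Raw II MM G P a) :
    ctrlMap II MM σ.inv (ctrlMap II MM σ F) = F := by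
  rw [← ctrlMap_comp]
  have hE : (σ.comp σ.inv).e = (InputIso.refl G P a).e := by
    ext γ; simp [InputIso.comp, InputIso.inv, InputIso.refl]
  rw [ctrlMap_congr II MM hE, ctrlMap_refl]

theorem ctrlMap_cancel_inv {G : DGraph} {P : G.V → ι} {G' : DGraph} {P' : G'.V → ι}
    {a : G.V} {a' : G'.V} (σ : InputIso G P G' P' a a') (F : Raw II MM G' P' a') :
    ctrlMap II MM σ (ctrlMap II MM σ.inv F) = F := by
  rw [← ctrlMap_comp]
  have hE : (σ.inv.comp σ).e = (InputIso.refl G' P' a').e := by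
    ext γ; simp [InputIso.comp, InputIso.inv, InputIso.refl]
  rw [ctrlMap_congr II MM hE, ctrlMap_refl]

theorem tcast_zero {i j : ι} (hij : i = j) {x : MM i} {y : MM j} :
    tcast II MM hij (0 : TangentSpace (II i) x) = (0 : TangentSpace (II j) y) := by
  subst hij; rfl

theorem ctrlMap_zero {G : DGraph} {P : G.V → ι} {G' : DGraph} {P' : G'.V → ι}
    {a : G.V} {a' : G'.V} (σ : InputIso G P G' P' a a') :
    ctrlMap II MM σ (0 : Raw II MM G P a) = 0 := by
  funext q
  exact tcast_zero II MM σ.hr.symm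

end Aux

theorem contMDiff_cast_mm {i j : ι} (hij : i = j) :
    ContMDiff (II i) (II j) ((⊤ : ℕ∞) : WithTop ℕ∞) (fun x : MM i => cast (congrArg MM hij) x) := by
  subst hij; exact contMDiff_id

theorem contMDiff_tangent_cast {i j : ι} (hij : i = j) :
    ContMDiff (II i).tangent (II j).tangent ((⊤ : ℕ∞) : WithTop ℕ∞)
      (fun p : TangentBundle (II i) (MM i) =>
        (⟨cast (congrArg MM hij) p.1, tcast II MM hij p.2⟩ :
          TangentBundle (II j) (MM j))) := by
  subst hij; exact contMDiff_id

theorem contMDiff_cast_pi {κ : Type} [Fintype κ] {f g : κ → ι} (hfg : ∀ γ, f γ = g γ) :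
    ContMDiff (ModelWithCorners.pi fun γ => II (f γ)) (ModelWithCorners.pi fun γ => II (g γ)) ((⊤ : ℕ∞) : WithTop ℕ∞)
      (fun (q : ∀ γ, MM (f γ)) (γ : κ) => cast (congrArg MM (hfg γ)) (q γ)) := by
  have hf : f = g := funext hfg
  subst hf
  exact contMDiff_id

theorem contMDiff_reindex {κ κ' : Type} [Fintype κ] [Fintype κ'] (e : κ ≃ κ') (f : κ' → ι) :
    ContMDiff (ModelWithCorners.pi fun γ' => II (f γ'))
      (ModelWithCorners.pi fun γ => II (f (e γ))) ((⊤ : ℕ∞) : WithTop ℕ∞)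
      (fun (q : ∀ γ', MM (f γ')) (γ : κ) => q (e γ)) := by
  intro x
  rw [← contMDiffWithinAt_univ, contMDiffWithinAt_iff']
  constructor
  · exact (continuous_pi fun γ => continuous_apply (e γ)).continuousWithinAt
  · set I : ModelWithCorners ℝ (∀ γ', EE (f γ')) (ModelPi fun γ' => HH (f γ')) :=
      ModelWithCorners.pi fun γ' => II (f γ')
    have hmem : ∀ y ∈ (extChartAt I x).target, ∀ γ',
        y γ' ∈ (extChartAt (II (f γ')) (x γ')).target := by
      intro y hy γ'
      rw [extChartAt_target, piChartedSpace_chartAt] at hy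
      rw [extChartAt_target]
      obtain ⟨hy1, hy2⟩ := hy
      constructor
      · exact hy1 γ' (Set.mem_univ γ')
      · obtain ⟨z, rfl⟩ := hy2
        exact ⟨z γ', rfl⟩
    have key : ∀ y ∈ (extChartAt I x).target,
        (extChartAt (ModelWithCorners.pi fun γ => II (f (e γ))) (fun γ => x (e γ)))
            ((fun (q : ∀ γ', MM (f γ')) (γ : κ) => q (e γ)) ((extChartAt I x).symm y)) =
          (ContinuousLinearMap.pi fun γ : κ =>
            ContinuousLinearMap.proj (R := ℝ) (φ := fun γ' => EE (f γ')) (e γ)) y := by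
      intro y hy
      funext γ
      exact (extChartAt (II (f (e γ))) (x (e γ))).right_inv (hmem y hy (e γ))
    refine ((ContinuousLinearMap.pi fun γ : κ =>
      ContinuousLinearMap.proj (R := ℝ) (φ := fun γ' => EE (f γ')) (e γ)).contDiff.contDiffAt.contDiffWithinAt).congr ?_ ?_
    · intro y hy
      exact key y hy.1
    · exact key _ ((extChartAt I x).map_source (mem_extChartAt_source x))

theorem contMDiff_phaseIn {G : DGraph} [Fintype G.E] [DecidableEq G.V]
    {P : G.V → ι} {G' : DGraph} [Fintype G'.E] [DecidableEq G'.V] {P' : G'.V → ι}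
    {a : G.V} {a' : G'.V} (σ : InputIso G P G' P' a a') :
    ContMDiff (PInModel II G' P' a') (PInModel II G P a) ((⊤ : ℕ∞) : WithTop ℕ∞) (phaseIn MM σ) := by
  unfold PInModel phaseIn
  refine ContMDiff.prodMk ?_ ?_
  · exact (contMDiff_cast_mm II MM σ.hr).comp contMDiff_fst
  · exact ((contMDiff_cast_pi II MM σ.hl).comp
      ((contMDiff_reindex II MM σ.e fun γ' => P' (G'.src γ'.1)).comp contMDiff_snd))

theorem isSmoothCtrl_ctrlMap {G : DGraph} [Fintype G.E] [DecidableEq G.V]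
    {P : G.V → ι} {G' : DGraph} [Fintype G'.E] [DecidableEq G'.V] {P' : G'.V → ι}
    {a : G.V} {a' : G'.V} (σ : InputIso G P G' P' a a') {F : Raw II MM G P a}
    (hF : IsSmoothCtrl II MM G P a F) :
    IsSmoothCtrl II MM G' P' a' (ctrlMap II MM σ F) := by
  have h1 : ContMDiff (PInModel II G' P' a') (II (P a)).tangent ((⊤ : ℕ∞) : WithTop ℕ∞)
      (fun q' => Bundle.TotalSpace.mk (phaseIn MM σ q').1 (F (phaseIn MM σ q')) :
        PIn MM G' P' a' → TangentBundle (II (P a)) (MM (P a))) :=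
    hF.comp (contMDiff_phaseIn II MM σ)
  have h2 := (contMDiff_tangent_cast II MM σ.hr.symm).comp h1
  unfold IsSmoothCtrl
  convert h2 using 2 with q'
  show Bundle.TotalSpace.mk q'.1 (ctrlMap II MM σ F q') =
    Bundle.TotalSpace.mk (cast (congrArg MM σ.hr.symm) (phaseIn MM σ q').1)
      (tcast II MM σ.hr.symm (F (phaseIn MM σ q')))
  have hx : q'.1 = cast (congrArg MM σ.hr.symm) (phaseIn MM σ q').1 := by
    show q'.1 = cast _ (cast _ q'.1)
    simp [cast_cast]
  exact congrArg (fun t => Bundle.TotalSpace.mk t (tcast II MM σ.hr.symm (F (phaseIn MM σ q')))) hx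

theorem isSmoothCtrl_zero {G : DGraph} [Fintype G.E] [DecidableEq G.V]
    {P : G.V → ι} (a : G.V) : IsSmoothCtrl II MM G P a 0 := by
  unfold IsSmoothCtrl PInModel
  exact (Bundle.contMDiff_zeroSection ℝ
    (TangentSpace (II (P a)) : MM (P a) → Type _)).comp contMDiff_fst
/-- **Surjectivity and kernel of the pullback on invariant virtual vector fields.**
For a fibration of networks `φ : (G,P) → (G',P')`, the pullback
`φ* : V(G',P') → V(G,P)` is surjective, and its kernel consists exactly of the invariant
virtual vector fields vanishing on the essential image of `φ`. -/
theorem pullback_surjective_kernel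
    {G G' : DGraph} [Fintype G.E] [DecidableEq G.V] [Fintype G'.E] [DecidableEq G'.V]
    (φ : GraphMap G G') (hφ : φ.IsFibration)
    {P : G.V → ι} {P' : G'.V → ι} (h : ∀ a, P' (φ.vmap a) = P a) :
    (∀ w : ∀ a, Raw II MM G P a,
      IsSmoothSec II MM G P w → IsInvariantSec II MM G P w →
        ∃ w' : ∀ a', Raw II MM G' P' a',
          (IsSmoothSec II MM G' P' w' ∧ IsInvariantSec II MM G' P' w') ∧
            pullbackVF II MM φ hφ h w' = w) ∧
    (∀ w' : ∀ a', Raw II MM G' P' a',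
      IsSmoothSec II MM G' P' w' → IsInvariantSec II MM G' P' w' →
        (pullbackVF II MM φ hφ h w' = 0 ↔
          ∀ a' ∈ essImage φ P', w' a' = 0)) := by
  classical
  constructor
  · -- surjectivity
    intro w hs hi
    set w' : ∀ a', Raw II MM G' P' a' := fun a' =>
      if H : a' ∈ essImage φ P' then
        ctrlMap II MM ((fibIso φ hφ h H.choose).comp H.choose_spec.some.inv) (w H.choose)
      else 0 with hw'
    have key : ∀ (a' : G'.V) (a : G.V) (σ : InputIso G' P' G' P' a' (φ.vmap a)),
        w' a' = ctrlMap II MM ((fibIso φ hφ h a).comp σ.inv) (w a) := by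
      intro a' a σ
      have H : a' ∈ essImage φ P' := ⟨a, ⟨σ⟩⟩
      rw [hw']
      simp only [dif_pos H]
      set b := H.choose with hb
      set τ : InputIso G' P' G' P' a' (φ.vmap b) := H.choose_spec.some with hτ
      have hinv := hi a b
        ((fibIso φ hφ h a).comp (σ.inv.comp (τ.comp (fibIso φ hφ h b).inv)))
      rw [← hinv, ← ctrlMap_comp]
      refine congrFun (ctrlMap_congr II MM ?_) (w a) |>.symm |>.symm
      ext γ
      simp [InputIso.comp, InputIso.inv]
      exact (congrArg (fun x => (τ.e.symm x).1) ((fibIso φ hφ h b).e.apply_symm_apply _)).trans (by simp)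
    refine ⟨w', ⟨?_, ?_⟩, ?_⟩
    · -- smoothness
      intro a'
      rw [hw']
      by_cases H : a' ∈ essImage φ P'
      · simp only [dif_pos H]
        exact isSmoothCtrl_ctrlMap II MM _ (hs _)
      · simp only [dif_neg H]
        exact isSmoothCtrl_zero II MM a'
    · -- invariance
      intro a' b' τ
      by_cases H : a' ∈ essImage φ P'
      · obtain ⟨a, ⟨σ⟩⟩ := H
        rw [key a' a σ, key b' a (τ.inv.comp σ), ← ctrlMap_comp]
        refine congrFun (ctrlMap_congr II MM ?_) (w a)
        ext γ
        simp [InputIso.comp, InputIso.inv]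
      · have Hb : b' ∉ essImage φ P' := by
          rintro ⟨a, ⟨ρ⟩⟩
          exact H ⟨a, ⟨τ.comp ρ⟩⟩
        rw [hw']
        simp only [dif_neg H, dif_neg Hb]
        exact ctrlMap_zero II MM τ
    · -- pullback equals w
      funext a
      show ctrlMap II MM (fibIso φ hφ h a).inv (w' (φ.vmap a)) = w a
      rw [key (φ.vmap a) a (InputIso.refl G' P' (φ.vmap a)), ← ctrlMap_comp]
      have hE : (((fibIso φ hφ h a).comp (InputIso.refl G' P' (φ.vmap a)).inv).comp
          (fibIso φ hφ h a).inv).e = (InputIso.refl G P a).e := by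
        ext γ
        simp [InputIso.comp, InputIso.inv, InputIso.refl]
      rw [ctrlMap_congr II MM hE, ctrlMap_refl]
  · -- kernel
    intro w' hs' hi'
    constructor
    · rintro hz a' ⟨a, ⟨σ⟩⟩
      have h1 : ctrlMap II MM (fibIso φ hφ h a).inv (w' (φ.vmap a)) = 0 := congrFun hz a
      have h2 : w' (φ.vmap a) = 0 := by
        rw [← ctrlMap_cancel_inv II MM (fibIso φ hφ h a) (w' (φ.vmap a)), h1,
          ctrlMap_zero]
      have h3 : ctrlMap II MM σ (w' a') = w' (φ.vmap a) := hi' a' (φ.vmap a) σ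
      rw [← ctrlMap_inv_cancel II MM σ (w' a'), h3, h2, ctrlMap_zero]
    · intro hv
      funext a
      show ctrlMap II MM (fibIso φ hφ h a).inv (w' (φ.vmap a)) = 0
      rw [hv (φ.vmap a) ⟨a, ⟨InputIso.refl G' P' (φ.vmap a)⟩⟩, ctrlMap_zero]
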